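/- Let n = 2, γ = 2α₁ + α₂, λ with λ₁ = 7, λ₂ = 5, and ξ = 2 for all positive roots. Consider the space V of Laurent polynomials f in variables x₁₁, x₁₂, x₂₁ that are symmetric under exchanging x₁₁ ↔ x₁₂ and satisfy: x₁₁²·f is polynomial in x₁₁; x₂₁²·f is polynomial in x₂₁; deg_{x₂₁} f ≤ 0; deg_{x₁₁} f ≤ −1; z²·f(z, x₁₂, z) is a polynomial in z (with Laurent coefficients in x₁₂); f vanishes on the diagonal x₁₁ = x₁₂ = x₂₁; and f is homogeneous of the appropriate fixed degrees. Then the two functions f₁ = x₁₁⁻²x₁₂⁻²x₂₁⁻²(x₂₁² + x₁₁x₁₂ − x₁₂x₂₁ − x₁₁x₂₁) and f₂ = x₁₁⁻²x₁₂⁻²x₂₁⁻²(x₁₂x₂₁² + x₁₁x₂₁² − 2x₁₁x₁₂x₂₁) both lie in V and are linearly independent. -/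

import Mathlib

/-- Laurent polynomials in the three variables `x₁₁, x₁₂, x₂₁` (variables indexed by
`Fin 3` via `0 ↦ x₁₁`, `1 ↦ x₁₂`, `2 ↦ x₂₁`), realized as finitely supported functions
on the exponent lattice `Fin 3 → ℤ`. -/
abbrev Laurent3 := (Fin 3 → ℤ) →₀ ℂ

/-- The space `V` of Example 5.6: Laurent polynomials `f(x₁₁,x₁₂,x₂₁)` symmetric under
`x₁₁ ↔ x₁₂`, with `x₁₁² f` polynomial in `x₁₁`, `x₂₁² f` polynomial in `x₂₁`,
`deg_{x₂₁} f ≤ 0`, `deg_{x₁₁} f ≤ −1`, such that `z² f(z,x₁₂,z)` is a polynomial in `z`,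
`f` vanishes under the specialization `x₁₁ = x₁₂ = x₂₁`, and `f` is homogeneous. -/
def memLaurentV (f : Laurent3) : Prop :=
  (∀ m : Fin 3 → ℤ, f (m ∘ (Equiv.swap (0 : Fin 3) 1)) = f m) ∧
  (∀ m ∈ f.support, (-2 : ℤ) ≤ m 0) ∧
  (∀ m ∈ f.support, (-2 : ℤ) ≤ m 2) ∧
  (∀ m ∈ f.support, m 2 ≤ 0) ∧
  (∀ m ∈ f.support, m 0 ≤ -1) ∧
  (∀ a b : ℤ, a < -2 →
    (∑ m ∈ f.support.filter (fun m => m 0 + m 2 = a ∧ m 1 = b), f m) = 0) ∧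
  (∀ a : ℤ, (∑ m ∈ f.support.filter (fun m => m 0 + m 1 + m 2 = a), f m) = 0) ∧
  (∃ d : ℤ, ∀ m ∈ f.support, m 0 + m 1 + m 2 = d)

/-- `f₁ = x₁₁⁻²x₁₂⁻²x₂₁⁻²(x₂₁² + x₁₁x₁₂ − x₁₂x₂₁ − x₁₁x₂₁)`. -/
noncomputable def fOne : Laurent3 :=
  Finsupp.single ![(-2 : ℤ), -2, 0] 1 + Finsupp.single ![(-1 : ℤ), -1, -2] 1
    - Finsupp.single ![(-2 : ℤ), -1, -1] 1 - Finsupp.single ![(-1 : ℤ), -2, -1] 1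

/-- `f₂ = x₁₁⁻²x₁₂⁻²x₂₁⁻²(x₁₂x₂₁² + x₁₁x₂₁² − 2x₁₁x₁₂x₂₁)`. -/
noncomputable def fTwo : Laurent3 :=
  Finsupp.single ![(-2 : ℤ), -1, 0] 1 + Finsupp.single ![(-1 : ℤ), -2, 0] 1
    - Finsupp.single ![(-1 : ℤ), -1, -1] 2

lemma fOne_apply (x : Fin 3 → ℤ) : fOne x = (if ![(-2:ℤ),-2,0] = x then (1:ℂ) else 0)
    + (if ![(-1:ℤ),-1,-2] = x then 1 else 0) - (if ![(-2:ℤ),-1,-1] = x then 1 else 0)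
    - (if ![(-1:ℤ),-2,-1] = x then 1 else 0) := by
  simp [fOne, Finsupp.single_apply]

lemma fTwo_apply (x : Fin 3 → ℤ) : fTwo x = (if ![(-2:ℤ),-1,0] = x then (1:ℂ) else 0)
    + (if ![(-1:ℤ),-2,0] = x then 1 else 0) - (if ![(-1:ℤ),-1,-1] = x then 2 else 0) := by
  simp [fTwo, Finsupp.single_apply]

lemma eq_comp_swap_iff (a m : Fin 3 → ℤ) :
    (a = m ∘ (Equiv.swap (0 : Fin 3) 1)) ↔ ((a ∘ ⇑(Equiv.swap (0 : Fin 3) 1)) = m) := by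
  constructor
  · rintro rfl; funext i; simp [Function.comp, Equiv.swap_apply_self]
  · rintro rfl; funext i; simp [Function.comp, Equiv.swap_apply_self]

lemma comp_swap_vec (u v w : ℤ) :
    (![u, v, w] ∘ ⇑(Equiv.swap (0 : Fin 3) 1)) = ![v, u, w] := by
  funext i; fin_cases i <;> simp [Equiv.swap_apply_def]

lemma sum_filter_fOne (P : (Fin 3 → ℤ) → Prop) [DecidablePred P] :
    ∑ m ∈ fOne.support.filter P, fOne m =
      (if P ![(-2:ℤ),-2,0] then 1 else 0) + (if P ![(-1:ℤ),-1,-2] then 1 else 0)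
        - (if P ![(-2:ℤ),-1,-1] then 1 else 0) - (if P ![(-1:ℤ),-2,-1] then 1 else 0) := by
  classical
  rw [Finset.sum_filter]
  have : ∑ m ∈ fOne.support, (if P m then fOne m else 0)
      = fOne.sum (fun m c => if P m then c else 0) := rfl
  rw [this, fOne]
  rw [Finsupp.sum_sub_index (by intros; split <;> simp),
      Finsupp.sum_sub_index (by intros; split <;> simp),
      Finsupp.sum_add_index' (by intros; simp) (by intros; split <;> simp),
      Finsupp.sum_single_index (by simp), Finsupp.sum_single_index (by simp),
      Finsupp.sum_single_index (by simp), Finsupp.sum_single_index (by simp)]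

lemma sum_filter_fTwo (P : (Fin 3 → ℤ) → Prop) [DecidablePred P] :
    ∑ m ∈ fTwo.support.filter P, fTwo m =
      (if P ![(-2:ℤ),-1,0] then 1 else 0) + (if P ![(-1:ℤ),-2,0] then 1 else 0)
        - (if P ![(-1:ℤ),-1,-1] then 2 else 0) := by
  classical
  rw [Finset.sum_filter]
  have : ∑ m ∈ fTwo.support, (if P m then fTwo m else 0)
      = fTwo.sum (fun m c => if P m then c else 0) := rfl
  rw [this, fTwo]
  rw [Finsupp.sum_sub_index (by intros; split <;> simp),
      Finsupp.sum_add_index' (by intros; simp) (by intros; split <;> simp),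
      Finsupp.sum_single_index (by simp), Finsupp.sum_single_index (by simp),
      Finsupp.sum_single_index (by simp)]

lemma mem_support_fOne {m : Fin 3 → ℤ} (hm : m ∈ fOne.support) :
    m = ![(-2:ℤ),-2,0] ∨ m = ![(-1:ℤ),-1,-2] ∨ m = ![(-2:ℤ),-1,-1] ∨ m = ![(-1:ℤ),-2,-1] := by
  by_contra h
  push_neg at h
  obtain ⟨h1, h2, h3, h4⟩ := h
  exact Finsupp.mem_support_iff.mp hm (by
    rw [fOne_apply, if_neg (Ne.symm h1), if_neg (Ne.symm h2), if_neg (Ne.symm h3),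
      if_neg (Ne.symm h4)]; ring)

lemma mem_support_fTwo {m : Fin 3 → ℤ} (hm : m ∈ fTwo.support) :
    m = ![(-2:ℤ),-1,0] ∨ m = ![(-1:ℤ),-2,0] ∨ m = ![(-1:ℤ),-1,-1] := by
  by_contra h
  push_neg at h
  obtain ⟨h1, h2, h3⟩ := h
  exact Finsupp.mem_support_iff.mp hm (by
    rw [fTwo_apply, if_neg (Ne.symm h1), if_neg (Ne.symm h2), if_neg (Ne.symm h3)]; ring)

lemma memLaurentV_fOne : memLaurentV fOne := by
  refine ⟨?_, ?_, ?_, ?_, ?_, ?_, ?_, ⟨-4, ?_⟩⟩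
  · intro m
    rw [fOne_apply, fOne_apply]
    simp only [eq_comp_swap_iff, comp_swap_vec]
    ring
  · intro m hm; rcases mem_support_fOne hm with rfl | rfl | rfl | rfl <;> norm_num
  · intro m hm; rcases mem_support_fOne hm with rfl | rfl | rfl | rfl <;> norm_num [Matrix.cons_val_two]
  · intro m hm; rcases mem_support_fOne hm with rfl | rfl | rfl | rfl <;> norm_num [Matrix.cons_val_two]
  · intro m hm; rcases mem_support_fOne hm with rfl | rfl | rfl | rfl <;> norm_num
  · intro a b ha
    rw [sum_filter_fOne]
    norm_num [Matrix.cons_val_two]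
  · intro a
    rw [sum_filter_fOne]
    norm_num [Matrix.cons_val_two]
  · intro m hm; rcases mem_support_fOne hm with rfl | rfl | rfl | rfl <;> norm_num [Matrix.cons_val_two]

lemma memLaurentV_fTwo : memLaurentV fTwo := by
  refine ⟨?_, ?_, ?_, ?_, ?_, ?_, ?_, ⟨-3, ?_⟩⟩
  · intro m
    rw [fTwo_apply, fTwo_apply]
    simp only [eq_comp_swap_iff, comp_swap_vec]
    ring
  · intro m hm; rcases mem_support_fTwo hm with rfl | rfl | rfl <;> norm_num
  · intro m hm; rcases mem_support_fTwo hm with rfl | rfl | rfl <;> norm_num [Matrix.cons_val_two]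
  · intro m hm; rcases mem_support_fTwo hm with rfl | rfl | rfl <;> norm_num [Matrix.cons_val_two]
  · intro m hm; rcases mem_support_fTwo hm with rfl | rfl | rfl <;> norm_num
  · intro a b ha
    rw [sum_filter_fTwo]
    norm_num [Matrix.cons_val_two]
    split_ifs <;> first | (exfalso; omega) | ring
  · intro a
    rw [sum_filter_fTwo]
    norm_num [Matrix.cons_val_two]
    split_ifs <;> first | (exfalso; omega) | ring
  · intro m hm; rcases mem_support_fTwo hm with rfl | rfl | rfl <;> norm_num [Matrix.cons_val_two]

/-- Example 5.6: `f₁` and `f₂` both lie in `V` and are linearly independent. -/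
theorem fOne_fTwo_mem_and_independent :
    memLaurentV fOne ∧ memLaurentV fTwo ∧ LinearIndependent ℂ ![fOne, fTwo] := by
  refine ⟨memLaurentV_fOne, memLaurentV_fTwo, ?_⟩
  rw [LinearIndependent.pair_iff]
  intro s t hst
  have h1 := DFunLike.congr_fun hst ![(-2:ℤ),-2,0]
  have h2 := DFunLike.congr_fun hst ![(-2:ℤ),-1,0]
  have e1 : fOne ![(-2:ℤ),-2,0] = 1 := by
    rw [fOne_apply]
    norm_num [funext_iff, Fin.forall_fin_succ]
  have e2 : fTwo ![(-2:ℤ),-2,0] = 0 := by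
    rw [fTwo_apply]
    norm_num [funext_iff, Fin.forall_fin_succ]
  have e3 : fOne ![(-2:ℤ),-1,0] = 0 := by
    rw [fOne_apply]
    norm_num [funext_iff, Fin.forall_fin_succ]
  have e4 : fTwo ![(-2:ℤ),-1,0] = 1 := by
    rw [fTwo_apply]
    norm_num [funext_iff, Fin.forall_fin_succ]
  simp only [Finsupp.add_apply, Finsupp.smul_apply, Finsupp.coe_zero, Pi.zero_apply,
    e1, e2, e3, e4, smul_eq_mul, mul_one, mul_zero, add_zero, zero_add] at h1 h2
  exact ⟨h1, h2⟩
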